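/- Every left-Cauchy sequence in 𝒫(ℕ) with the quasi-metric d(F,G) = 2^{-min(F\G)} (d(F,G)=0 if F ⊆ G) converges: if (A_n) satisfies ∀ε>0 ∃N ∀m>n>N, d(A_n,A_m) < ε, then there exists A ∈ 𝒫(ℕ) with d(A,A_n) → 0 and d(A_n,A) → 0. -/
import Mathlib


open Classical in
/-- The quasi-metric on `𝒫(ℕ)`: `d F G = 2^{-j}` where `j` is the least element of
`F \ G`, and `d F G = 0` if `F ⊆ G`. -/
noncomputable def dP (F G : Set ℕ) : ℝ :=
  if F ⊆ G then 0 else (2 : ℝ) ^ (-((sInf (F \ G) : ℕ) : ℤ))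

lemma dP_nonneg (F G : Set ℕ) : 0 ≤ dP F G := by
  unfold dP; split_ifs <;> positivity

lemma dP_lt_of (F G : Set ℕ) (k : ℕ) (h : ∀ j ≤ k, j ∈ F → j ∈ G) :
    dP F G < 2 ^ (-(k : ℤ)) := by
  unfold dP; split_ifs with hFG
  · positivity
  · have hne : (F \ G).Nonempty := Set.diff_nonempty.mpr hFG
    have hmem := Nat.sInf_mem hne
    have hk : k < sInf (F \ G) := by
      by_contra hc
      push_neg at hc
      exact hmem.2 (h _ hc hmem.1)
    have : (-((sInf (F \ G) : ℕ) : ℤ)) < -(k : ℤ) := by exact_mod_cast neg_lt_neg (by exact_mod_cast hk)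
    exact zpow_lt_zpow_right₀ (by norm_num) this

lemma of_dP_lt (F G : Set ℕ) (k : ℕ) (h : dP F G < 2 ^ (-(k : ℤ))) :
    ∀ j ≤ k, j ∈ F → j ∈ G := by
  unfold dP at h; split_ifs at h with hFG
  · exact fun j _ hj => hFG hj
  · intro j hjk hjF
    by_contra hjG
    have hmem : j ∈ F \ G := ⟨hjF, hjG⟩
    have h1 : sInf (F \ G) ≤ j := Nat.sInf_le hmem
    have h2 : (-((sInf (F \ G) : ℕ) : ℤ)) < -(k : ℤ) := by
      have := (zpow_lt_zpow_iff_right₀ (by norm_num : (1:ℝ) < 2)).mp h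
      exact this
    have : (k : ℤ) < ((sInf (F \ G) : ℕ) : ℤ) := by omega
    have : k < sInf (F \ G) := by exact_mod_cast this
    omega

lemma two_zpow_pos (k : ℕ) : (0:ℝ) < 2 ^ (-(k : ℤ)) := by positivity

theorem stmt5 (A : ℕ → Set ℕ)
    (hLC : ∀ ε : ℝ, 0 < ε → ∃ N, ∀ m n, N < n → n < m → dP (A n) (A m) < ε) :
    ∃ L : Set ℕ,
      Filter.Tendsto (fun n => dP L (A n)) Filter.atTop (nhds 0) ∧
      Filter.Tendsto (fun n => dP (A n) L) Filter.atTop (nhds 0) := by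
  set L : Set ℕ := {j | ∃ N, ∀ n ≥ N, j ∈ A n} with hL
  refine ⟨L, ?_, ?_⟩
  · -- dP L (A n) → 0
    rw [Metric.tendsto_atTop]
    intro ε hε
    obtain ⟨k, hk⟩ := exists_pow_lt_of_lt_one hε (by norm_num : (1/2 : ℝ) < 1)
    have hk' : (2:ℝ) ^ (-(k:ℤ)) < ε := by
      calc (2:ℝ) ^ (-(k:ℤ)) = (1/2 : ℝ) ^ k := by
            rw [zpow_neg, zpow_natCast]; simp [one_div]
        _ < ε := hk
    -- for each j, a threshold beyond which j ∈ L → j ∈ A n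
    have hthr : ∀ j : ℕ, ∃ N, j ∈ L → ∀ n ≥ N, j ∈ A n := by
      intro j
      by_cases hj : j ∈ L
      · obtain ⟨N, hN⟩ := hj
        exact ⟨N, fun _ => hN⟩
      · exact ⟨0, fun h => absurd h hj⟩
    choose f hf using hthr
    refine ⟨(Finset.range (k+1)).sup f, fun n hn => ?_⟩
    rw [Real.dist_eq, sub_zero, abs_of_nonneg (dP_nonneg _ _)]
    refine lt_trans (dP_lt_of L (A n) k ?_) hk'
    intro j hjk hjL
    exact hf j hjL n (le_trans (Finset.le_sup (Finset.mem_range.mpr (by omega))) hn)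
  · -- dP (A n) L → 0
    rw [Metric.tendsto_atTop]
    intro ε hε
    obtain ⟨k, hk⟩ := exists_pow_lt_of_lt_one hε (by norm_num : (1/2 : ℝ) < 1)
    have hk' : (2:ℝ) ^ (-(k:ℤ)) < ε := by
      calc (2:ℝ) ^ (-(k:ℤ)) = (1/2 : ℝ) ^ k := by
            rw [zpow_neg, zpow_natCast]; simp [one_div]
        _ < ε := hk
    obtain ⟨N, hN⟩ := hLC _ (two_zpow_pos k)
    refine ⟨N + 1, fun n hn => ?_⟩
    rw [Real.dist_eq, sub_zero, abs_of_nonneg (dP_nonneg _ _)]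
    refine lt_trans (dP_lt_of (A n) L k ?_) hk'
    intro j hjk hjA
    refine ⟨n + 1, fun m hm => ?_⟩
    exact of_dP_lt (A n) (A m) k (hN m n (by omega) (by omega)) j hjk hjA
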